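/- Let j be a positive integer. Then the subgroup of GL(3,ℂ) generated by E, L₂ = diag(1, −1, −1) and −F_{0,j} (this is the group S₄(j)) has order 3·2^{j+2}. -/

import Mathlib

open Matrix

/-- The matrix `E` with entries `E₀₁ = E₁₂ = E₂₀ = 1` and all other entries `0`. -/
noncomputable def Ematrix : Matrix (Fin 3) (Fin 3) ℂ := !![0, 1, 0; 0, 0, 1; 1, 0, 0]

/-- The matrix `L₂ = diag(1, −1, −1)`. -/
noncomputable def L2matrix : Matrix (Fin 3) (Fin 3) ℂ := Matrix.diagonal ![1, -1, -1]

/-- The matrix `F_{m,j}`, with entries `−ξ` in positions `(0,2)`, `(1,1)`, `(2,0)` and `0`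
elsewhere, where `ξ = exp(2πi/(3^m·2^j))`. -/
noncomputable def Fmatrix (m j : ℕ) : Matrix (Fin 3) (Fin 3) ℂ :=
  (-(Complex.exp (2 * (Real.pi : ℂ) * Complex.I / ((3 : ℂ) ^ m * (2 : ℂ) ^ j)))) •
    (!![0, 0, 1; 0, 1, 0; 1, 0, 0] : Matrix (Fin 3) (Fin 3) ℂ)

def sigf : Fin 3 → Fin 3 := ![1, 2, 0]
def tauf : Fin 3 → Fin 3 := ![2, 1, 0]

noncomputable def permM (g : Fin 3 → Fin 3) : Matrix (Fin 3) (Fin 3) ℂ :=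
  Matrix.of fun i j => if j = g i then 1 else 0

noncomputable def Dm (ε : Fin 3 → ℤˣ) : Matrix (Fin 3) (Fin 3) ℂ :=
  Matrix.diagonal fun i => ((ε i : ℤ) : ℂ)

lemma permM_id : permM id = 1 := by
  ext i j
  simp [permM, Matrix.one_apply, eq_comm]

lemma permM_mul (g h : Fin 3 → Fin 3) : permM g * permM h = permM (h ∘ g) := by
  ext i j
  rw [Matrix.mul_apply, Finset.sum_eq_single (g i)]
  · simp [permM]
  · intro b _ hb
    simp [permM, hb, Ne.symm hb]
  · intro h; exact absurd (Finset.mem_univ _) h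

lemma Em_eq : Ematrix = permM sigf := by
  ext i j
  fin_cases i <;> fin_cases j <;> rfl

lemma Pm_eq : (!![0, 0, 1; 0, 1, 0; 1, 0, 0] : Matrix (Fin 3) (Fin 3) ℂ) = permM tauf := by
  ext i j
  fin_cases i <;> fin_cases j <;> rfl

lemma permM_pow (g : Fin 3 → Fin 3) (m : ℕ) : permM g ^ m = permM (g^[m]) := by
  induction m with
  | zero => simp [permM_id]
  | succ m ih => rw [pow_succ, ih, permM_mul, Function.iterate_succ']

lemma permM_mul_Dm (g : Fin 3 → Fin 3) (ε : Fin 3 → ℤˣ) :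
    permM g * Dm ε = Dm (ε ∘ g) * permM g := by
  ext i j
  simp only [Dm]
  rw [Matrix.mul_diagonal, Matrix.diagonal_mul]
  simp only [permM, Matrix.of_apply, Function.comp_apply]
  by_cases h : j = g i <;> simp [h]

lemma Dm_mul_Dm (ε ε' : Fin 3 → ℤˣ) : Dm ε * Dm ε' = Dm (ε * ε') := by
  have h : (fun i => (((ε * ε') i : ℤ) : ℂ)) = fun i => ((ε i : ℤ) : ℂ) * ((ε' i : ℤ) : ℂ) := by
    funext i
    push_cast [Pi.mul_apply]
    ring
  rw [Dm, Dm, Dm, Matrix.diagonal_mul_diagonal, h]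

lemma Dm_one : Dm 1 = 1 := by
  simp [Dm]

lemma Dm_mul_self (ε : Fin 3 → ℤˣ) : Dm ε * Dm ε = 1 := by
  have h : ε * ε = 1 := by
    funext i
    exact Int.units_mul_self (ε i)
  rw [Dm_mul_Dm, h, Dm_one]

lemma sigf_three : sigf^[3] = id := by decide
lemma tauf_two : tauf^[2] = id := by decide

lemma sigf_bij : Function.Bijective sigf := by decide
lemma tauf_bij : Function.Bijective tauf := by decide

lemma perm_inj : ∀ (a a' : Fin 3) (b b' : Fin 2),
    (sigf^[a.val] ∘ tauf^[b.val]) = (sigf^[a'.val] ∘ tauf^[b'.val]) → a = a' ∧ b = b' := by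
  decide

-- product over Fin 3 composed with a bijection
lemma prod_comp_bij (ε : Fin 3 → ℤˣ) {g : Fin 3 → Fin 3} (hg : Function.Bijective g) :
    (ε ∘ g) 0 * (ε ∘ g) 1 * (ε ∘ g) 2 = ε 0 * ε 1 * ε 2 := by
  have h1 : ∀ δ : Fin 3 → ℤˣ, δ 0 * δ 1 * δ 2 = ∏ i, δ i := by
    intro δ
    rw [Fin.prod_univ_three]
  rw [h1, h1]
  exact Fintype.prod_bijective g hg _ _ (fun i => rfl)

section GenericGroup

variable {G : Type*} [Group G]

lemma pow_eq_pow_of_mod {x : G} {m : ℕ} (h : x ^ m = 1) {a b : ℕ} (hab : a % m = b % m) :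
    x ^ a = x ^ b := by
  rw [pow_eq_pow_iff_modEq]
  exact Nat.ModEq.of_dvd (orderOf_dvd_of_pow_eq_one h) hab

lemma conj_pow_lemma {α : Type*} (f : α → α) (e : G) (d : (α → ℤˣ) → G)
    (hd : ∀ ε, e * d ε = d (ε ∘ f) * e) :
    ∀ (m : ℕ) (ε : α → ℤˣ), e ^ m * d ε = d (ε ∘ f^[m]) * e ^ m := by
  intro m
  induction m with
  | zero => intro ε; simp
  | succ m ih =>
    intro ε
    rw [pow_succ, mul_assoc, hd, ← mul_assoc, ih, mul_assoc, ← pow_succ]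
    rw [Function.iterate_succ']
    rfl

lemma braid_pow_lemma (e f : G) (h : e * f = f * e ^ 2) :
    ∀ (m : ℕ), e ^ m * f = f * e ^ (2 * m) := by
  intro m
  induction m with
  | zero => simp
  | succ m ih =>
    rw [pow_succ, mul_assoc, h, ← mul_assoc, ih, mul_assoc, ← pow_add]
    ring_nf

lemma braid_pow_pow_lemma (e f : G) (h : e * f = f * e ^ 2) :
    ∀ (l m : ℕ), e ^ m * f ^ l = f ^ l * e ^ (2 ^ l * m) := by
  intro l
  induction l with
  | zero => intro m; simp
  | succ l ih =>
    intro m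
    rw [pow_succ, ← mul_assoc, ih, mul_assoc, braid_pow_lemma e f h, ← mul_assoc, ← pow_succ,
      ← mul_assoc, pow_succ, mul_assoc]
    ring_nf
    rw [← mul_assoc]

end GenericGroup

noncomputable def Dg (ε : Fin 3 → ℤˣ) : GL (Fin 3) ℂ :=
  ⟨Dm ε, Dm ε, Dm_mul_self ε, Dm_mul_self ε⟩

@[simp] lemma Dg_val (ε : Fin 3 → ℤˣ) : (Dg ε).val = Dm ε := rfl

lemma Dg_one : Dg 1 = 1 := Units.ext (by simp [Dm_one])

lemma Dg_mul (ε ε' : Fin 3 → ℤˣ) : Dg ε * Dg ε' = Dg (ε * ε') :=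
  Units.ext (by simp [Dm_mul_Dm])

/-- The sign subtype. -/
def SgT : Type := {ε : Fin 3 → ℤˣ // ε 0 * ε 1 * ε 2 = 1}

instance : Fintype SgT := Subtype.fintype _

lemma SgT_card : Nat.card SgT = 4 := by
  rw [Nat.card_eq_fintype_card]
  decide

/-- The parameter type. -/
def Xty (n : ℕ) : Type := ZMod n × SgT × ZMod 3

noncomputable def Gmap (n : ℕ) (E F : GL (Fin 3) ℂ) (x : Xty n) : GL (Fin 3) ℂ :=
  Dg x.2.1.1 * F ^ x.1.val * E ^ x.2.2.val

noncomputable def xi (j : ℕ) : ℂ :=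
  Complex.exp (2 * (Real.pi : ℂ) * Complex.I / ((2 ^ j : ℕ) : ℂ))

lemma xi_prim (j : ℕ) : IsPrimitiveRoot (xi j) (2 ^ j) :=
  Complex.isPrimitiveRoot_exp _ (by positivity)

lemma xi_ne_zero (j : ℕ) : xi j ≠ 0 := Complex.exp_ne_zero _

section GLlevel

variable {j : ℕ} {E F : GL (Fin 3) ℂ}
  (hj : 0 < j) (hE : E.val = permM sigf) (hF : F.val = xi j • permM tauf)

include hE in
lemma hE3 : E ^ 3 = 1 := by
  apply Units.ext
  rw [Units.val_pow_eq_pow_val, hE, permM_pow, sigf_three, permM_id, Units.val_one]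

include hE in
lemma hED : ∀ ε, E * Dg ε = Dg (ε ∘ sigf) * E := by
  intro ε
  apply Units.ext
  rw [Units.val_mul, Units.val_mul, hE, Dg_val, Dg_val, permM_mul_Dm]

include hF in
lemma hFD : ∀ ε, F * Dg ε = Dg (ε ∘ tauf) * F := by
  intro ε
  apply Units.ext
  rw [Units.val_mul, Units.val_mul, hF, Dg_val, Dg_val, smul_mul_assoc, permM_mul_Dm,
    mul_smul_comm]

include hE hF in
lemma hEF : E * F = F * E ^ 2 := by
  apply Units.ext
  rw [Units.val_mul, Units.val_mul, Units.val_pow_eq_pow_val, hE, hF, smul_mul_assoc,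
    mul_smul_comm, permM_mul, permM_pow, permM_mul]
  have h : tauf ∘ sigf = sigf^[2] ∘ tauf := by decide
  rw [h]

include hj hF in
lemma hFn : F ^ (2 ^ j) = 1 := by
  apply Units.ext
  rw [Units.val_pow_eq_pow_val, hF, smul_pow, permM_pow, (xi_prim j).pow_eq_one,
    Units.val_one]
  have h2 : 2 ^ j = 2 * 2 ^ (j - 1) := by
    rw [← pow_succ']
    congr 1
    omega
  rw [h2, Function.iterate_mul, tauf_two, Function.iterate_id, permM_id, one_smul]

end GLlevel

lemma sg_constraint {ε ε' : Fin 3 → ℤˣ} (hε : ε 0 * ε 1 * ε 2 = 1) (hε' : ε' 0 * ε' 1 * ε' 2 = 1)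
    (a b : ℕ) :
    (ε * ((ε' ∘ sigf^[a]) ∘ tauf^[b])) 0 * (ε * ((ε' ∘ sigf^[a]) ∘ tauf^[b])) 1 *
      (ε * ((ε' ∘ sigf^[a]) ∘ tauf^[b])) 2 = 1 := by
  set η := (ε' ∘ sigf^[a]) ∘ tauf^[b] with hη
  have hb : Function.Bijective ((sigf^[a]) ∘ (tauf^[b])) :=
    (sigf_bij.iterate a).comp (tauf_bij.iterate b)
  have hη1 : η 0 * η 1 * η 2 = 1 := by
    have : η = ε' ∘ (sigf^[a] ∘ tauf^[b]) := rfl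
    rw [this, prod_comp_bij ε' hb]
    exact hε'
  simp only [Pi.mul_apply]
  rw [mul_mul_mul_comm (ε 0) (η 0) (ε 1) (η 1),
    mul_mul_mul_comm (ε 0 * ε 1) (η 0 * η 1) (ε 2) (η 2), hε, hη1, one_mul]

noncomputable def mulX (n : ℕ) (x y : Xty n) : Xty n :=
  (x.1 + y.1,
   ⟨x.2.1.1 * ((y.2.1.1 ∘ sigf^[x.2.2.val]) ∘ tauf^[x.1.val]),
     sg_constraint x.2.1.2 y.2.1.2 _ _⟩,
   ((2 ^ y.1.val * x.2.2.val + y.2.2.val : ℕ) : ZMod 3))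

section GLmain

variable {j : ℕ} {E F : GL (Fin 3) ℂ}

lemma Gmul (hj : 0 < j) (hE : E.val = permM sigf) (hF : F.val = xi j • permM tauf)
    (x y : Xty (2 ^ j)) :
    Gmap (2 ^ j) E F x * Gmap (2 ^ j) E F y = Gmap (2 ^ j) E F (mulX (2 ^ j) x y) := by
  haveI : NeZero (2 ^ j) := ⟨pow_ne_zero _ two_ne_zero⟩
  obtain ⟨k, ⟨ε, hε⟩, a⟩ := x
  obtain ⟨k', ⟨ε', hε'⟩, a'⟩ := y
  simp only [Gmap, mulX, mul_assoc]
  have s1 : ∀ z, E ^ a.val * (Dg ε' * z) = Dg (ε' ∘ sigf^[a.val]) * (E ^ a.val * z) := by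
    intro z
    rw [← mul_assoc, conj_pow_lemma sigf E Dg (hED hE) a.val ε', mul_assoc]
  have s2 : ∀ z, F ^ k.val * (Dg (ε' ∘ sigf^[a.val]) * z)
      = Dg ((ε' ∘ sigf^[a.val]) ∘ tauf^[k.val]) * (F ^ k.val * z) := by
    intro z
    rw [← mul_assoc, conj_pow_lemma tauf F Dg (hFD hF) k.val _, mul_assoc]
  have s3 : ∀ z, E ^ a.val * (F ^ k'.val * z) = F ^ k'.val * (E ^ (2 ^ k'.val * a.val) * z) := by
    intro z
    rw [← mul_assoc, braid_pow_pow_lemma E F (hEF hE hF) k'.val a.val, mul_assoc]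
  rw [s1, s2, s3, ← mul_assoc (Dg ε), Dg_mul, ← pow_add E, ← mul_assoc (F ^ k.val), ← pow_add F]
  have e1 : F ^ (k.val + k'.val) = F ^ ((k + k').val) := by
    apply pow_eq_pow_of_mod (hFn hj hF)
    rw [ZMod.val_add, Nat.mod_mod_of_dvd _ dvd_rfl]
  have e2 : E ^ (2 ^ k'.val * a.val + a'.val)
      = E ^ ((((2 ^ k'.val * a.val + a'.val : ℕ) : ZMod 3)).val) := by
    apply pow_eq_pow_of_mod (hE3 hE)
    rw [ZMod.val_natCast]
    simp [Nat.mod_mod_of_dvd]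
  rw [e1, e2]

end GLmain


lemma Dm_mul_permM (ε : Fin 3 → ℤˣ) (g : Fin 3 → Fin 3) (i j : Fin 3) :
    (Dm ε * permM g) i j = ((ε i : ℤ) : ℂ) * (if j = g i then 1 else 0) := by
  rw [Dm, Matrix.diagonal_mul]
  rfl

section Inj

variable {j : ℕ} {E F : GL (Fin 3) ℂ}

lemma Gval (hE : E.val = permM sigf) (hF : F.val = xi j • permM tauf) (x : Xty (2 ^ j)) :
    (Gmap (2 ^ j) E F x).val
      = (xi j) ^ (x.1.val) • (Dm x.2.1.1 * permM (sigf^[x.2.2.val] ∘ tauf^[x.1.val])) := by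
  simp only [Gmap, Units.val_mul, Units.val_pow_eq_pow_val, hE, hF, Dg_val]
  rw [smul_pow, permM_pow, permM_pow, mul_smul_comm, smul_mul_assoc, mul_assoc, permM_mul]

lemma iterate_mod_two (m : ℕ) : tauf^[m] = tauf^[m % 2] := by
  conv_lhs => rw [← Nat.div_add_mod m 2]
  rw [Function.iterate_add, Function.iterate_mul, tauf_two, Function.iterate_id]
  rfl

lemma coprime_pow_three (j : ℕ) : Nat.Coprime (2 ^ j) 3 :=
  Nat.Coprime.pow_left j (by decide)

lemma xi_pow_cancel (hj : 0 < j) {s t : ℕ} (hst : s ≤ t)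
    (h : (xi j) ^ (3 * s) = (xi j) ^ (3 * t)) : 2 ^ j ∣ (t - s) := by
  have h3 : 3 * t = 3 * s + 3 * (t - s) := by omega
  rw [h3, pow_add] at h
  have hz : (xi j) ^ (3 * s) ≠ 0 := pow_ne_zero _ (xi_ne_zero j)
  have h1 : (xi j) ^ (3 * (t - s)) = 1 :=
    (mul_left_cancel₀ hz (by rw [mul_one]; exact h)).symm
  have := ((xi_prim j).pow_eq_one_iff_dvd _).1 h1
  exact Nat.Coprime.dvd_of_dvd_mul_left (coprime_pow_three j) this

lemma Ginj (hj : 0 < j) (hE : E.val = permM sigf) (hF : F.val = xi j • permM tauf) :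
    Function.Injective (Gmap (2 ^ j) E F) := by
  haveI : NeZero (2 ^ j) := ⟨pow_ne_zero _ two_ne_zero⟩
  intro x y h
  obtain ⟨k, ⟨ε, hε⟩, a⟩ := x
  obtain ⟨k', ⟨ε', hε'⟩, a'⟩ := y
  have hv := congrArg Units.val h
  replace hv := (Gval hE hF _).symm.trans (hv.trans (Gval hE hF _))
  simp only at hv
  rw [iterate_mod_two k.val, iterate_mod_two k'.val] at hv
  set g : Fin 3 → Fin 3 := sigf^[a.val] ∘ tauf^[k.val % 2] with hgdef
  set g' : Fin 3 → Fin 3 := sigf^[a'.val] ∘ tauf^[k'.val % 2] with hg'def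
  have hent : ∀ i jj : Fin 3, (xi j) ^ k.val * (((ε i : ℤ) : ℂ) * (if jj = g i then 1 else 0))
      = (xi j) ^ k'.val * (((ε' i : ℤ) : ℂ) * (if jj = g' i then 1 else 0)) := by
    intro i jj
    have h2 := congrFun (congrFun hv i) jj
    rw [Matrix.smul_apply, Matrix.smul_apply, Dm_mul_permM, Dm_mul_permM] at h2
    exact h2
  have hne : ∀ i : Fin 3, (xi j) ^ k.val * ((ε i : ℤ) : ℂ) ≠ 0 := by
    intro i
    apply mul_ne_zero (pow_ne_zero _ (xi_ne_zero j))
    rcases Int.units_eq_one_or (ε i) with h' | h' <;> simp [h']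
  have hgg : g = g' := by
    funext i
    by_contra hcon
    have h3 := hent i (g i)
    rw [if_pos rfl, if_neg (fun hh : g i = g' i => hcon hh), mul_one, mul_zero, mul_zero] at h3
    exact absurd h3 (hne i)
  have hfin := perm_inj ⟨a.val, ZMod.val_lt a⟩ ⟨a'.val, ZMod.val_lt a'⟩
    ⟨k.val % 2, Nat.mod_lt _ (by norm_num)⟩ ⟨k'.val % 2, Nat.mod_lt _ (by norm_num)⟩
    (by exact hgg)
  have haa : a.val = a'.val := congrArg Fin.val hfin.1
  have hi : ∀ i : Fin 3, (xi j) ^ k.val * ((ε i : ℤ) : ℂ)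
      = (xi j) ^ k'.val * ((ε' i : ℤ) : ℂ) := by
    intro i
    have h3 := hent i (g i)
    rw [if_pos rfl, ← hgg, if_pos rfl, mul_one, mul_one] at h3
    exact h3
  have hprod : (xi j) ^ (3 * k.val) = (xi j) ^ (3 * k'.val) := by
    have h0 := hi 0; have h1 := hi 1; have h2 := hi 2
    have hc : ((ε 0 : ℤ) : ℂ) * ((ε 1 : ℤ) : ℂ) * ((ε 2 : ℤ) : ℂ) = 1 := by
      have h4 : (((ε 0 * ε 1 * ε 2 : ℤˣ) : ℤ) : ℂ) = 1 := by rw [hε]; simp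
      push_cast at h4
      exact h4
    have hc' : ((ε' 0 : ℤ) : ℂ) * ((ε' 1 : ℤ) : ℂ) * ((ε' 2 : ℤ) : ℂ) = 1 := by
      have h4 : (((ε' 0 * ε' 1 * ε' 2 : ℤˣ) : ℤ) : ℂ) = 1 := by rw [hε']; simp
      push_cast at h4
      exact h4
    calc (xi j) ^ (3 * k.val)
        = ((xi j) ^ k.val * ((ε 0 : ℤ) : ℂ)) * ((xi j) ^ k.val * ((ε 1 : ℤ) : ℂ)) *
          ((xi j) ^ k.val * ((ε 2 : ℤ) : ℂ)) := by
          rw [show 3 * k.val = k.val + k.val + k.val by ring, pow_add, pow_add]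
          rw [show ((xi j)^k.val * ((ε 0 : ℤ) : ℂ)) * ((xi j)^k.val * ((ε 1 : ℤ) : ℂ)) *
            ((xi j)^k.val * ((ε 2 : ℤ) : ℂ))
            = ((xi j)^k.val * (xi j)^k.val * (xi j)^k.val) *
              (((ε 0 : ℤ) : ℂ) * ((ε 1 : ℤ) : ℂ) * ((ε 2 : ℤ) : ℂ)) by ring, hc, mul_one]
      _ = ((xi j) ^ k'.val * ((ε' 0 : ℤ) : ℂ)) * ((xi j) ^ k'.val * ((ε' 1 : ℤ) : ℂ)) *
          ((xi j) ^ k'.val * ((ε' 2 : ℤ) : ℂ)) := by rw [h0, h1, h2]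
      _ = (xi j) ^ (3 * k'.val) := by
          rw [show 3 * k'.val = k'.val + k'.val + k'.val by ring, pow_add, pow_add]
          rw [show ((xi j)^k'.val * ((ε' 0 : ℤ) : ℂ)) * ((xi j)^k'.val * ((ε' 1 : ℤ) : ℂ)) *
            ((xi j)^k'.val * ((ε' 2 : ℤ) : ℂ))
            = ((xi j)^k'.val * (xi j)^k'.val * (xi j)^k'.val) *
              (((ε' 0 : ℤ) : ℂ) * ((ε' 1 : ℤ) : ℂ) * ((ε' 2 : ℤ) : ℂ)) by ring, hc', mul_one]
  have hkk : k.val = k'.val := by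
    rcases le_total k.val k'.val with hle | hle
    · have hd := xi_pow_cancel hj hle hprod
      have hlt : k'.val - k.val < 2 ^ j := lt_of_le_of_lt (Nat.sub_le _ _) (ZMod.val_lt k')
      have h0 := Nat.eq_zero_of_dvd_of_lt hd hlt
      omega
    · have hd := xi_pow_cancel hj hle hprod.symm
      have hlt : k.val - k'.val < 2 ^ j := lt_of_le_of_lt (Nat.sub_le _ _) (ZMod.val_lt k)
      have h0 := Nat.eq_zero_of_dvd_of_lt hd hlt
      omega
  have hk : k = k' := ZMod.val_injective _ hkk
  have hee : ε = ε' := by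
    funext i
    have h3 := hi i
    rw [hkk] at h3
    have hcast : ((ε i : ℤ) : ℂ) = ((ε' i : ℤ) : ℂ) :=
      mul_left_cancel₀ (pow_ne_zero _ (xi_ne_zero j)) h3
    exact Units.ext (by exact_mod_cast hcast)
  have ha : a = a' := ZMod.val_injective _ haa
  subst hk ha
  subst hee
  rfl

end Inj

lemma inv_mem_of_finite {G : Type*} [Group G] {S : Set G} (hfin : S.Finite)
    (hone : (1 : G) ∈ S) (hmul : ∀ a ∈ S, ∀ b ∈ S, a * b ∈ S) {g : G} (hg : g ∈ S) :
    g⁻¹ ∈ S := by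
  have hpow : ∀ m : ℕ, g ^ (m + 1) ∈ S := by
    intro m
    induction m with
    | zero => simpa using hg
    | succ m ih => rw [pow_succ]; exact hmul _ ih _ hg
  suffices H : ∀ i l : ℕ, i < l → g ^ (i + 1) = g ^ (l + 1) → g⁻¹ ∈ S by
    have hnotinj : ¬ Function.Injective (fun m : ℕ => g ^ (m + 1)) := by
      intro hinj
      have hinf : (Set.range fun m : ℕ => g ^ (m + 1)).Infinite :=
        Set.infinite_range_of_injective hinj
      exact hinf (hfin.subset (by rintro _ ⟨m, rfl⟩; exact hpow m))
    rw [Function.not_injective_iff] at hnotinj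
    obtain ⟨i, l, hil, hne⟩ := hnotinj
    rcases lt_or_gt_of_ne hne with hlt | hlt
    · exact H i l hlt hil
    · exact H l i hlt hil.symm
  intro i l hlt heq
  have hone' : g ^ (l - i) = 1 := by
    have h5 : g ^ (i + 1) = g ^ (i + 1) * g ^ (l - i) := by
      rw [← pow_add]
      rw [heq]
      congr 1
      omega
    exact (left_eq_mul.1 h5)
  have hinv : g⁻¹ = g ^ (l - i - 1) := by
    apply inv_eq_of_mul_eq_one_right
    rw [← pow_succ']
    have hsucc : (l - i - 1) + 1 = l - i := by omega
    rw [hsucc, hone']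
  rw [hinv]
  rcases Nat.eq_zero_or_pos (l - i - 1) with h0 | h0
  · rw [h0, pow_zero]; exact hone
  · obtain ⟨m, hm⟩ := Nat.exists_eq_succ_of_ne_zero (Nat.pos_iff_ne_zero.1 h0)
    rw [hm]
    exact hpow m

def epsL : Fin 3 → ℤˣ := ![1, -1, -1]

/-- The group `S₄(j)`, generated by `E`, `L₂` and `−F_{0,j}` inside `GL(3,ℂ)`,
has order `3·2^{j+2}`. -/
theorem S4j_order (j : ℕ) (hj : 0 < j)
    (E L F : GL (Fin 3) ℂ)
    (hE : E.val = Ematrix) (hL : L.val = L2matrix) (hF : F.val = -(Fmatrix 0 j)) :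
    Nat.card ↥(Subgroup.closure ({E, L, F} : Set (GL (Fin 3) ℂ))) = 3 * 2 ^ (j + 2) := by
  haveI : NeZero (2 ^ j) := ⟨pow_ne_zero _ two_ne_zero⟩
  haveI : Fact (1 < 2 ^ j) := ⟨Nat.one_lt_two_pow_iff.2 (by omega)⟩
  have hE2 : E.val = permM sigf := hE.trans Em_eq
  have hF2 : F.val = xi j • permM tauf := by
    rw [hF, Fmatrix, Pm_eq, neg_smul, neg_neg, xi]
    congr 2
    push_cast
    norm_num
  have hL2 : L = Dg epsL := by
    apply Units.ext
    rw [hL, L2matrix, Dg_val, Dm]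
    ext i k
    fin_cases i <;> fin_cases k <;>
      simp [Matrix.diagonal_apply, epsL] <;> norm_num
  have hfinX : Finite (Xty (2 ^ j)) := by unfold Xty; infer_instance
  have hfin : (Set.range (Gmap (2 ^ j) E F)).Finite := Set.finite_range _
  have honemem : (1 : GL (Fin 3) ℂ) ∈ Set.range (Gmap (2 ^ j) E F) := by
    refine ⟨((0 : ZMod (2 ^ j)), ⟨1, by simp⟩, (0 : ZMod 3)), ?_⟩
    simp [Gmap, Dg_one, ZMod.val_zero]
  have hmulmem : ∀ a ∈ Set.range (Gmap (2 ^ j) E F), ∀ b ∈ Set.range (Gmap (2 ^ j) E F),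
      a * b ∈ Set.range (Gmap (2 ^ j) E F) := by
    rintro _ ⟨x, rfl⟩ _ ⟨y, rfl⟩
    exact ⟨mulX _ x y, (Gmul hj hE2 hF2 x y).symm⟩
  let SS : Subgroup (GL (Fin 3) ℂ) :=
    { carrier := Set.range (Gmap (2 ^ j) E F)
      one_mem' := honemem
      mul_mem' := fun ha hb => hmulmem _ ha _ hb
      inv_mem' := fun ha => inv_mem_of_finite hfin honemem hmulmem ha }
  have hEmem : E ∈ SS := by
    refine ⟨((0 : ZMod (2 ^ j)), ⟨1, by simp⟩, (1 : ZMod 3)), ?_⟩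
    simp [Gmap, Dg_one, ZMod.val_zero]
    rw [show (1 : ZMod 3).val = 1 from rfl, pow_one]
  have hLmem : L ∈ SS := by
    refine ⟨((0 : ZMod (2 ^ j)), ⟨epsL, by decide⟩, (0 : ZMod 3)), ?_⟩
    simp [Gmap, ZMod.val_zero, hL2]
  have hFmem : F ∈ SS := by
    refine ⟨((1 : ZMod (2 ^ j)), ⟨1, by simp⟩, (0 : ZMod 3)), ?_⟩
    simp [Gmap, Dg_one, ZMod.val_zero, ZMod.val_one, pow_one]
  have hDmem : ∀ ε : SgT, Dg ε.1 ∈ Subgroup.closure ({E, L, F} : Set (GL (Fin 3) ℂ)) := by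
    rintro ⟨ε, hε⟩
    have hEc : E ∈ Subgroup.closure ({E, L, F} : Set (GL (Fin 3) ℂ)) :=
      Subgroup.subset_closure (by simp)
    have hLc : L ∈ Subgroup.closure ({E, L, F} : Set (GL (Fin 3) ℂ)) :=
      Subgroup.subset_closure (by simp)
    have hD1 : Dg (epsL ∘ sigf) ∈ Subgroup.closure ({E, L, F} : Set (GL (Fin 3) ℂ)) := by
      have h := hED hE2 epsL
      have : Dg (epsL ∘ sigf) = E * Dg epsL * E⁻¹ :=
        eq_mul_inv_iff_mul_eq.2 h.symm
      rw [this, ← hL2]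
      exact mul_mem (mul_mem hEc hLc) (inv_mem hEc)
    have hD2 : Dg ((epsL ∘ sigf) ∘ sigf) ∈ Subgroup.closure ({E, L, F} : Set (GL (Fin 3) ℂ)) := by
      have h := hED hE2 (epsL ∘ sigf)
      have : Dg ((epsL ∘ sigf) ∘ sigf) = E * Dg (epsL ∘ sigf) * E⁻¹ :=
        eq_mul_inv_iff_mul_eq.2 h.symm
      rw [this]
      exact mul_mem (mul_mem hEc hD1) (inv_mem hEc)
    rcases Int.units_eq_one_or (ε 0) with h0 | h0 <;>
      rcases Int.units_eq_one_or (ε 1) with h1 | h1 <;>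
      rcases Int.units_eq_one_or (ε 2) with h2 | h2 <;>
      rw [h0, h1, h2] at hε
    · have : ε = 1 := by funext i; fin_cases i <;> simp [h0, h1, h2]
      show Dg ε ∈ Subgroup.closure ({E, L, F} : Set (GL (Fin 3) ℂ))
      rw [this, Dg_one]
      exact one_mem _
    · exact absurd hε (by decide)
    · exact absurd hε (by decide)
    · have : ε = epsL := by funext i; fin_cases i <;> simp [h0, h1, h2, epsL]
      show Dg ε ∈ Subgroup.closure ({E, L, F} : Set (GL (Fin 3) ℂ))
      rw [this, ← hL2]
      exact hLc
    · exact absurd hε (by decide)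
    · have : ε = (epsL ∘ sigf) ∘ sigf := by
        funext i; fin_cases i <;> simp [h0, h1, h2, epsL, sigf]
      show Dg ε ∈ Subgroup.closure ({E, L, F} : Set (GL (Fin 3) ℂ))
      rw [this]
      exact hD2
    · have : ε = epsL ∘ sigf := by
        funext i; fin_cases i <;> simp [h0, h1, h2, epsL, sigf]
      show Dg ε ∈ Subgroup.closure ({E, L, F} : Set (GL (Fin 3) ℂ))
      rw [this]
      exact hD1
    · exact absurd hε (by decide)
  have hsub : Subgroup.closure ({E, L, F} : Set (GL (Fin 3) ℂ)) = SS := by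
    apply le_antisymm
    · rw [Subgroup.closure_le]
      rintro g hg
      rcases hg with rfl | rfl | rfl
      · exact hEmem
      · exact hLmem
      · exact hFmem
    · rintro g ⟨x, rfl⟩
      have hEc : E ∈ Subgroup.closure ({E, L, F} : Set (GL (Fin 3) ℂ)) :=
        Subgroup.subset_closure (by simp)
      have hFc : F ∈ Subgroup.closure ({E, L, F} : Set (GL (Fin 3) ℂ)) :=
        Subgroup.subset_closure (by simp)
      exact mul_mem (mul_mem (hDmem x.2.1) (pow_mem hFc _)) (pow_mem hEc _)
  rw [hsub]
  have hcard : Nat.card ↥SS = Nat.card (Xty (2 ^ j)) :=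
    Nat.card_range_of_injective (Ginj hj hE2 hF2)
  rw [hcard]
  have hXcard : Nat.card (Xty (2 ^ j)) = 2 ^ j * (4 * 3) := by
    have h1 : Nat.card (Xty (2 ^ j)) = Nat.card (ZMod (2 ^ j) × SgT × ZMod 3) := rfl
    rw [h1, Nat.card_prod, Nat.card_prod, Nat.card_zmod, Nat.card_zmod, SgT_card]
  rw [hXcard, pow_add]
  ring
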